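/- arXiv:1503.01175 — 3 statements merged into one kernel-verified Lean document; each statement's English description precedes it below -/
import Mathlib

section
/- For all a > 0, x > 0, and real y, the integral over t in (-∞, ∞) of sin(a t) / (x² + (y - t)²) dt equals (π / x) · e^{-a x} · sin(a y). -/
open Real MeasureTheory Filter Set FourierTransform
open scoped RealInnerProductSpace

/- integrability of complex exponential on Ioi -/
lemma integrableOn_cexp_Ioi {c : ℂ} (hc : c.re < 0) :
    IntegrableOn (fun t : ℝ => Complex.exp (c * t)) (Ioi (0:ℝ)) := by
  have h : 0 < -c.re := by linarith
  refine ((exp_neg_integrableOn_Ioi 0 h).mono' ?_ ?_)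
  · exact (Complex.continuous_exp.comp (by fun_prop)).aestronglyMeasurable
  · filter_upwards with t
    simp [Complex.norm_exp, neg_mul, Complex.mul_re]

lemma int_cexp_Ioi {c : ℂ} (hc : c.re < 0) :
    ∫ t : ℝ in Ioi (0:ℝ), Complex.exp (c * t) = -c⁻¹ := by
  have hc0 : c ≠ 0 := fun h => by simp [h] at hc
  have hd : ∀ t ∈ Ici (0:ℝ), HasDerivAt (fun t : ℝ => Complex.exp (c*t)/c)
      (Complex.exp (c*t)) t := by
    intro t _
    have h1 : HasDerivAt (fun y : ℂ => Complex.exp (c*y)/c) (Complex.exp (c*t)) (t:ℂ) := by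
      have := ((Complex.hasDerivAt_exp (c*t)).comp (t:ℂ)
        ((hasDerivAt_id (t:ℂ)).const_mul c)).div_const c
      simpa [mul_comm, mul_div_assoc, mul_div_cancel_left₀ _ hc0] using this
    simpa using h1.comp_ofReal
  have htends : Tendsto (fun t : ℝ => Complex.exp (c*t)/c) atTop (nhds 0) := by
    rw [tendsto_zero_iff_norm_tendsto_zero]
    have h2 : Tendsto (fun t : ℝ => Real.exp (c.re * t) / ‖c‖) atTop (nhds 0) := by
      have h3 : Tendsto (fun t : ℝ => c.re * t) atTop atBot :=
        tendsto_id.const_mul_atTop_of_neg hc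
      simpa using (Real.tendsto_exp_atBot.comp h3).div_const ‖c‖
    refine h2.congr fun t => ?_
    simp [Complex.norm_exp, Complex.mul_re]
  have := integral_Ioi_of_hasDerivAt_of_tendsto' hd (integrableOn_cexp_Ioi hc) htends
  simpa using this

lemma integrableOn_Iic_of_neg {f : ℝ → ℂ} (h : IntegrableOn (fun t => f (-t)) (Ioi (0:ℝ))) :
    IntegrableOn f (Iic (0:ℝ)) := by
  have A : MeasurableEmbedding fun x : ℝ => -x :=
    (Homeomorph.neg ℝ).isClosedEmbedding.measurableEmbedding
  have : IntegrableOn f (Iic (0:ℝ)) (Measure.map (fun x : ℝ => -x) volume) := by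
    rw [A.integrableOn_map_iff]
    have hpre : (fun x : ℝ => -x) ⁻¹' (Iic 0) = Ici 0 := by
      ext u; simp
    rw [hpre]
    rw [integrableOn_Ici_iff_integrableOn_Ioi]
    exact h
  simpa [Measure.map_neg_eq_self (volume : Measure ℝ)] using this

lemma key_ae (a s : ℝ) : (fun t : ℝ => Complex.exp ((-a + s*Complex.I) * t))
    =ᵐ[volume.restrict (Ioi (0:ℝ))]
    (fun t : ℝ => Complex.exp ((s*t:ℝ) * Complex.I) * Real.exp (-a * |t|)) := by
  filter_upwards [ae_restrict_mem measurableSet_Ioi] with t ht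
  rw [abs_of_pos ht, Complex.ofReal_exp, ← Complex.exp_add]
  congr 1
  push_cast
  ring

lemma cexp_int (a b : ℝ) (ha : 0 < a) :
    ∫ t : ℝ, Complex.exp ((b*t:ℝ) * Complex.I) * Real.exp (-a * |t|)
      = 2*a/(a^2+b^2) := by
  set g : ℝ → ℂ := fun t => Complex.exp ((b*t:ℝ) * Complex.I) * Real.exp (-a * |t|) with hg
  have hre : ∀ s : ℝ, (-a + s*Complex.I).re < 0 := by
    intro s; simpa using ha
  have hint : ∀ s : ℝ, IntegrableOn
      (fun t : ℝ => Complex.exp ((s*t:ℝ) * Complex.I) * Real.exp (-a * |t|)) (Ioi (0:ℝ)) :=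
    fun s => ((integrableOn_cexp_Ioi (hre s)).congr (key_ae a s))
  have hIoi : ∀ s : ℝ, ∫ t : ℝ in Ioi (0:ℝ),
      Complex.exp ((s*t:ℝ) * Complex.I) * Real.exp (-a * |t|) = -(-a + s*Complex.I)⁻¹ := by
    intro s
    rw [← integral_congr_ae (key_ae a s)]
    exact int_cexp_Ioi (hre s)
  have hneg : ∀ t : ℝ, g (-t) = Complex.exp (((-b)*t:ℝ) * Complex.I) * Real.exp (-a * |t|) := by
    intro t; simp only [hg, abs_neg]; push_cast; ring_nf
  have hintIic : IntegrableOn g (Iic (0:ℝ)) := by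
    refine integrableOn_Iic_of_neg ?_
    exact (hint (-b)).congr (Filter.Eventually.of_forall fun t => (hneg t).symm)
  have hIic : ∫ t : ℝ in Iic (0:ℝ), g t = -(-a + ((-b:ℝ):ℂ)*Complex.I)⁻¹ := by
    have h0 : ∫ t : ℝ in Iic (0:ℝ), g t = ∫ t : ℝ in Ioi (0:ℝ), g (-t) := by
      simpa using integral_comp_neg_Iic (0:ℝ) (fun t => g (-t))
    rw [h0]
    calc ∫ t : ℝ in Ioi (0:ℝ), g (-t)
        = ∫ t : ℝ in Ioi (0:ℝ), Complex.exp (((-b)*t:ℝ) * Complex.I) * Real.exp (-a * |t|) :=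
          integral_congr_ae (Filter.Eventually.of_forall fun t => hneg t)
      _ = -(-a + ((-b:ℝ):ℂ)*Complex.I)⁻¹ := hIoi (-b)
  have hsplit : ∫ t : ℝ, g t = (∫ t : ℝ in Iic (0:ℝ), g t) + ∫ t : ℝ in Ioi (0:ℝ), g t :=
    (intervalIntegral.integral_Iic_add_Ioi hintIic (hint b)).symm
  rw [hsplit, hIic, hIoi b]
  have ha' : (a:ℂ) ≠ 0 := by exact_mod_cast ha.ne'
  have h1 : ((a:ℂ)^2 + (b:ℂ)^2) ≠ 0 := by
    have : ((a:ℂ)^2 + (b:ℂ)^2) = ((a^2+b^2 : ℝ) : ℂ) := by push_cast; ring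
    rw [this]
    exact_mod_cast (by positivity : (a^2+b^2:ℝ) ≠ 0)
  have h2 : (-(a:ℂ) + (-b)*Complex.I) ≠ 0 := by
    intro h
    have := congrArg Complex.re h
    simp at this
    exact ha.ne' this
  have h3 : (-(a:ℂ) + b*Complex.I) ≠ 0 := by
    intro h
    have := congrArg Complex.re h
    simp at this
    exact ha.ne' this
  push_cast
  rw [eq_div_iff h1]
  have huv : ((-a:ℂ)+(-b)*Complex.I) * ((-a:ℂ)+b*Complex.I) = (a:ℂ)^2+(b:ℂ)^2 := by
    linear_combination (-(b:ℂ)^2) * Complex.I_sq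
  rw [← huv]
  calc (-(-(a:ℂ) + -b*Complex.I)⁻¹ + -(-(a:ℂ) + b*Complex.I)⁻¹)
        * ((-(a:ℂ) + -b*Complex.I) * (-(a:ℂ) + b*Complex.I))
      = -(((-(a:ℂ) + -b*Complex.I)⁻¹ * (-(a:ℂ) + -b*Complex.I)) * (-(a:ℂ) + b*Complex.I))
        - ((-(a:ℂ) + b*Complex.I)⁻¹ * (-(a:ℂ) + b*Complex.I)) * (-(a:ℂ) + -b*Complex.I) := by
        ring
    _ = 2*(a:ℂ) := by rw [inv_mul_cancel₀ h2, inv_mul_cancel₀ h3]; ring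

lemma integrable_inv_sq_add {x : ℝ} (hx : 0 < x) :
    Integrable (fun t : ℝ => (x^2 + t^2)⁻¹) := by
  have h := (integrable_inv_one_add_sq.comp_div hx.ne').const_mul (x^2)⁻¹
  refine h.congr (Filter.Eventually.of_forall fun t => ?_)
  have hx2 : x^2 ≠ 0 := by positivity
  field_simp

lemma integrable_cexp_mul_inv {x : ℝ} (hx : 0 < x) (v : ℝ) :
    Integrable (fun t : ℝ => Complex.exp ((v*t:ℝ)*Complex.I) * ((x^2+t^2 : ℝ) : ℂ)⁻¹) := by
  refine ((integrable_inv_sq_add hx).mono' ?_ ?_)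
  · apply Continuous.aestronglyMeasurable
    apply Continuous.mul
    · exact Complex.continuous_exp.comp (by fun_prop)
    · refine Continuous.inv₀ (by fun_prop) fun t => ?_
      have h0 : (0:ℝ) < x^2 + t^2 := by positivity
      exact_mod_cast h0.ne'
  · filter_upwards with t
    have h0 : (0:ℝ) < x^2 + t^2 := by positivity
    rw [norm_mul, Complex.norm_exp_ofReal_mul_I, one_mul, norm_inv, Complex.norm_real,
      Real.norm_eq_abs, abs_of_pos h0]

lemma fourier_exp_abs {x : ℝ} (hx : 0 < x) (ξ : ℝ) :
    𝓕 (fun t : ℝ => ((rexp (-x * |t|) : ℝ) : ℂ)) ξ = 2*x/(x^2 + (2*π*ξ)^2) := by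
  rw [Real.fourier_eq']
  have h : ∀ t : ℝ, Complex.exp ((↑(-2*π*⟪t, ξ⟫))*Complex.I) • ((rexp (-x*|t|):ℝ):ℂ)
      = Complex.exp ((-(2*π*ξ)*t : ℝ)*Complex.I) * rexp (-x*|t|) := by
    intro t
    rw [smul_eq_mul]
    congr 2
    simp [RCLike.inner_apply]
    ring
  rw [integral_congr_ae (Filter.Eventually.of_forall h), cexp_int x (-(2*π*ξ)) hx]
  push_cast
  ring_nf

lemma key_complex {x : ℝ} (hx : 0 < x) (v : ℝ) :
    ∫ t : ℝ, Complex.exp ((v*t:ℝ)*Complex.I) * ((x^2+t^2 : ℝ):ℂ)⁻¹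
      = (π/x) * rexp (-x*|v|) := by
  set f : ℝ → ℂ := fun t => ((rexp (-x*|t|) : ℝ) : ℂ) with hf
  have hf_cont : Continuous f := by
    apply Complex.continuous_ofReal.comp
    exact Real.continuous_exp.comp (by fun_prop)
  have hf_int : Integrable f := by
    have hIoi : IntegrableOn f (Ioi (0:ℝ)) := by
      refine ((exp_neg_integrableOn_Ioi 0 hx).mono' (hf_cont.aestronglyMeasurable.restrict) ?_)
      filter_upwards [ae_restrict_mem measurableSet_Ioi] with t ht
      simp only [hf, Complex.norm_real, Real.norm_eq_abs, Real.abs_exp, abs_of_pos (show (0:ℝ) < t from ht),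
        le_refl]
    have hIic : IntegrableOn f (Iic (0:ℝ)) := by
      refine integrableOn_Iic_of_neg (hIoi.congr ?_)
      filter_upwards with t
      simp [hf]
    have huniv : Iic (0:ℝ) ∪ Ioi 0 = univ := Iic_union_Ioi
    rw [← integrableOn_univ, ← huniv]
    exact hIic.union hIoi
  have hFf : 𝓕 f = fun ξ : ℝ => ((2*x/(x^2+(2*π*ξ)^2) : ℝ) : ℂ) := by
    funext ξ
    rw [fourier_exp_abs hx ξ]
    push_cast
    ring
  have hFf_int : Integrable (𝓕 f) := by
    rw [hFf]
    refine ((integrable_inv_sq_add hx).const_mul (2*x)).mono' ?_ ?_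
    · apply Complex.continuous_ofReal.comp ?_ |>.aestronglyMeasurable
      apply Continuous.div (by fun_prop) (by fun_prop)
      intro ξ
      positivity
    · filter_upwards with ξ
      have h1 : (0:ℝ) < x^2 + (2*π*ξ)^2 := by positivity
      have h2 : (0:ℝ) < x^2 + ξ^2 := by positivity
      rw [Complex.norm_real, Real.norm_eq_abs, abs_of_nonneg (by positivity)]
      rw [div_eq_mul_inv]
      refine mul_le_mul_of_nonneg_left ?_ (by positivity)
      refine inv_anti₀ h2 ?_
      have hπ : (1:ℝ) ≤ (2*π)^2 := by nlinarith [Real.pi_gt_three]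
      have : ξ^2 ≤ (2*π*ξ)^2 := by nlinarith [sq_nonneg ξ]
      linarith
  have hinv := hf_int.fourierInv_fourier_eq hFf_int (hf_cont.continuousAt (x := v))
  rw [hFf, Real.fourierInv_eq'] at hinv
  have hrw : ∀ ξ : ℝ, Complex.exp ((↑(2*π*⟪ξ, v⟫))*Complex.I) • ((2*x/(x^2+(2*π*ξ)^2) : ℝ) : ℂ)
      = (2*x : ℂ) * (Complex.exp ((v*(2*π*ξ):ℝ)*Complex.I) * ((x^2+(2*π*ξ)^2 : ℝ):ℂ)⁻¹) := by
    intro ξ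
    rw [smul_eq_mul]
    have : (2*π*⟪ξ, v⟫ : ℝ) = (v*(2*π*ξ) : ℝ) := by
      simp [RCLike.inner_apply]
      ring
    rw [this]
    push_cast
    have h1 : ((x:ℂ)^2 + (2*(π:ℂ)*ξ)^2) ≠ 0 := by
      have h0 : (0:ℝ) < x^2 + (2*π*ξ)^2 := by positivity
      have : ((x:ℂ)^2 + (2*(π:ℂ)*ξ)^2) = ((x^2 + (2*π*ξ)^2 : ℝ):ℂ) := by push_cast; ring
      rw [this]
      exact_mod_cast h0.ne'
    field_simp
  rw [integral_congr_ae (Filter.Eventually.of_forall hrw), integral_const_mul] at hinv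
  have hcomp : (∫ ξ : ℝ, Complex.exp ((v*(2*π*ξ):ℝ)*Complex.I) * ((x^2+(2*π*ξ)^2 : ℝ):ℂ)⁻¹)
      = |(2*π)⁻¹| • ∫ u : ℝ, Complex.exp ((v*u:ℝ)*Complex.I) * ((x^2+u^2 : ℝ):ℂ)⁻¹ := by
    exact MeasureTheory.Measure.integral_comp_mul_left
      (fun u : ℝ => Complex.exp ((v*u:ℝ)*Complex.I) * ((x^2+u^2 : ℝ):ℂ)⁻¹) (2*π)
  rw [hcomp] at hinv
  have hπpos : (0:ℝ) < 2*π := by positivity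
  rw [abs_of_pos (inv_pos.2 hπpos)] at hinv
  have hx' : (x:ℂ) ≠ 0 := by exact_mod_cast hx.ne'
  have hπ' : ((2*π:ℝ):ℂ) ≠ 0 := by exact_mod_cast hπpos.ne'
  rw [Complex.real_smul] at hinv
  have hfv : ((rexp (-x*|v|) : ℝ):ℂ) = f v := rfl
  rw [hfv, ← hinv, Complex.ofReal_inv]
  have hπ0 : ((π:ℝ):ℂ) ≠ 0 := by exact_mod_cast Real.pi_ne_zero
  push_cast
  field_simp
  ring
  congr 1
  funext t
  ring

lemma key_real {x : ℝ} (hx : 0 < x) (v : ℝ) :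
    ∫ t : ℝ, Real.cos (v*t) / (x^2+t^2) = π/x * rexp (-x*|v|) := by
  have h := key_complex hx v
  have hre := integral_re (integrable_cexp_mul_inv hx v)
  rw [h] at hre
  have h2 : ∀ t : ℝ, Real.cos (v*t) / (x^2+t^2)
      = RCLike.re (Complex.exp ((v*t:ℝ)*Complex.I) * ((x^2+t^2:ℝ):ℂ)⁻¹) := by
    intro t
    rw [RCLike.re_to_complex, ← Complex.ofReal_inv]
    simp only [Complex.mul_re, Complex.ofReal_re, Complex.ofReal_im, mul_zero, sub_zero,
      Complex.exp_ofReal_mul_I_re]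
    rw [div_eq_mul_inv]
  simp_rw [h2]
  rw [hre, RCLike.re_to_complex]
  rw [show ((π:ℂ)/x * (rexp (-x*|v|) : ℝ) : ℂ) = ((π/x * rexp (-x*|v|) : ℝ) : ℂ) by push_cast; ring]
  exact Complex.ofReal_re _

theorem poisson_sin (a x y : ℝ) (ha : 0 < a) (hx : 0 < x) :
    ∫ t : ℝ, Real.sin (a * t) / (x ^ 2 + (y - t) ^ 2)
      = (Real.pi / x) * Real.exp (-a * x) * Real.sin (a * y) := by
  have hshift : (fun t : ℝ => Real.sin (a * t) / (x ^ 2 + (y - t) ^ 2))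
      = fun t : ℝ => (fun u : ℝ => Real.sin (a * (u + y)) / (x^2 + u^2)) (t - y) := by
    funext t
    show Real.sin (a * t) / (x ^ 2 + (y - t) ^ 2)
        = Real.sin (a * ((t - y) + y)) / (x^2 + (t - y)^2)
    rw [show (t - y) + y = t by ring, show (y - t)^2 = (t - y)^2 by ring]
  rw [hshift, integral_sub_right_eq_self (fun u : ℝ => Real.sin (a * (u + y)) / (x^2 + u^2)) y]
  have hexpand : (fun u : ℝ => Real.sin (a * (u + y)) / (x^2 + u^2))
      = fun u : ℝ => Real.cos (a*y) * (Real.sin (a*u) / (x^2+u^2))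
          + Real.sin (a*y) * (Real.cos (a*u) / (x^2+u^2)) := by
    funext u
    rw [mul_add, Real.sin_add]
    ring
  rw [hexpand]
  have hI : Integrable (fun t : ℝ => (x^2 + t^2)⁻¹) := integrable_inv_sq_add hx
  have hsin : Integrable (fun u : ℝ => Real.sin (a*u) / (x^2+u^2)) := by
    simp_rw [div_eq_mul_inv]
    exact hI.bdd_mul ((Real.continuous_sin.comp (by fun_prop)).aestronglyMeasurable)
      (c := 1) (Filter.Eventually.of_forall fun u => by simpa using Real.abs_sin_le_one _)
  have hcos : Integrable (fun u : ℝ => Real.cos (a*u) / (x^2+u^2)) := by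
    simp_rw [div_eq_mul_inv]
    exact hI.bdd_mul ((Real.continuous_cos.comp (by fun_prop)).aestronglyMeasurable)
      (c := 1) (Filter.Eventually.of_forall fun u => by simpa using Real.abs_cos_le_one _)
  rw [integral_add ((hsin.const_mul _)) ((hcos.const_mul _)), integral_const_mul,
    integral_const_mul]
  have hodd : ∫ u : ℝ, Real.sin (a*u) / (x^2+u^2) = 0 := by
    have h1 := integral_neg_eq_self (fun u : ℝ => Real.sin (a*u) / (x^2+u^2)) volume
    have h2 : ∀ u : ℝ, Real.sin (a*(-u)) / (x^2+(-u)^2) = -(Real.sin (a*u) / (x^2+u^2)) := by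
      intro u
      rw [show a*(-u) = -(a*u) by ring, Real.sin_neg, neg_sq]
      ring
    simp_rw [h2, integral_neg] at h1
    linarith
  have hckey : ∫ u : ℝ, Real.cos (a*u) / (x^2+u^2) = π/x * rexp (-a*x) := by
    rw [key_real hx a, abs_of_pos ha]
    ring_nf
  rw [hodd, hckey]
  ring
end

section
/- For all a > 0 and x > 0, the integral over t in (0, ∞) of t·sin(a t) / (x² + t²) dt equals (π/2) · e^{-a x}. -/
open Real MeasureTheory Filter intervalIntegral Set

namespace TSin

variable {x : ℝ}

lemma sq_add_pos (hx : 0 < x) (t : ℝ) : 0 < x ^ 2 + t ^ 2 :=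
  add_pos_of_pos_of_nonneg (pow_pos hx 2) (sq_nonneg t)

/-- antiderivative of 1/(x²+t²) -/
lemma hasDerivAt_atan (hx : 0 < x) (t : ℝ) :
    HasDerivAt (fun t : ℝ => Real.arctan (t / x) / x) ((x ^ 2 + t ^ 2)⁻¹) t := by
  have h1 : HasDerivAt (fun t : ℝ => t / x) (1 / x) t := (hasDerivAt_id t).div_const x
  have h2 := (Real.hasDerivAt_arctan (t / x)).comp t h1
  have h3 := h2.div_const x
  refine h3.congr_deriv ?_
  field_simp

lemma tendsto_atan (hx : 0 < x) :
    Tendsto (fun t : ℝ => Real.arctan (t / x) / x) atTop (nhds (π / 2 / x)) := by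
  have h : Tendsto (fun t : ℝ => t / x) atTop atTop := tendsto_id.atTop_div_const hx
  exact ((Real.tendsto_arctan_atTop.mono_right nhdsWithin_le_nhds).comp h).div_const x

lemma integrable_g1 (hx : 0 < x) : IntegrableOn (fun t : ℝ => (x ^ 2 + t ^ 2)⁻¹) (Ioi 0) := by
  refine integrableOn_Ioi_deriv_of_nonneg' (g := fun t => Real.arctan (t / x) / x)
    (fun t _ => hasDerivAt_atan hx t) (fun t _ => by positivity) (tendsto_atan hx)

lemma integral_g1 (hx : 0 < x) : ∫ t in Ioi (0:ℝ), (x ^ 2 + t ^ 2)⁻¹ = π / (2 * x) := by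
  have := integral_Ioi_of_hasDerivAt_of_nonneg
    (g := fun t => Real.arctan (t / x) / x) (g' := fun t => (x ^ 2 + t ^ 2)⁻¹)
    ((hasDerivAt_atan hx 0).continuousAt.continuousWithinAt)
    (fun t _ => hasDerivAt_atan hx t) (fun t _ => by positivity) (tendsto_atan hx)
  rw [this]
  simp [Real.arctan_zero]
  ring

/-- antiderivative of 1/(x²+t²)² -/
lemma hasDerivAt_Phi (hx : 0 < x) (t : ℝ) :
    HasDerivAt (fun t : ℝ => t / (2 * x ^ 2 * (x ^ 2 + t ^ 2)) + Real.arctan (t / x) / (2 * x ^ 3))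
      (((x ^ 2 + t ^ 2) ^ 2)⁻¹) t := by
  have h0 := sq_add_pos hx t
  have h1 : HasDerivAt (fun t : ℝ => 2 * x ^ 2 * (x ^ 2 + t ^ 2)) (2 * x ^ 2 * (2 * t)) t := by
    have : HasDerivAt (fun t : ℝ => x ^ 2 + t ^ 2) (2 * t) t := by
      simpa using ((hasDerivAt_pow 2 t).const_add (x ^ 2))
    exact this.const_mul _
  have h2 : HasDerivAt (fun t : ℝ => t / (2 * x ^ 2 * (x ^ 2 + t ^ 2)))
      ((1 * (2 * x ^ 2 * (x ^ 2 + t ^ 2)) - t * (2 * x ^ 2 * (2 * t))) /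
        (2 * x ^ 2 * (x ^ 2 + t ^ 2)) ^ 2) t :=
    (hasDerivAt_id t).div h1 (by positivity)
  have h3 : HasDerivAt (fun t : ℝ => t / x) (1 / x) t := (hasDerivAt_id t).div_const x
  have h4 := ((Real.hasDerivAt_arctan (t / x)).comp t h3).div_const (2 * x ^ 3)
  have h5 := h2.add h4
  refine h5.congr_deriv ?_
  have hx' : x ≠ 0 := ne_of_gt hx
  field_simp
  ring

lemma tendsto_Phi (hx : 0 < x) :
    Tendsto (fun t : ℝ => t / (2 * x ^ 2 * (x ^ 2 + t ^ 2)) + Real.arctan (t / x) / (2 * x ^ 3))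
      atTop (nhds (π / (4 * x ^ 3))) := by
  have h1 : Tendsto (fun t : ℝ => t / (2 * x ^ 2 * (x ^ 2 + t ^ 2))) atTop (nhds 0) := by
    have : (fun t : ℝ => t / (2 * x ^ 2 * (x ^ 2 + t ^ 2)))
        =ᶠ[atTop] fun t => (1 / (2 * x ^ 2)) * (t / (x ^ 2 + t ^ 2)) := by
      filter_upwards [eventually_gt_atTop 0] with t ht
      have := sq_add_pos hx t
      field_simp
    rw [tendsto_congr' this]
    have h2 : Tendsto (fun t : ℝ => t / (x ^ 2 + t ^ 2)) atTop (nhds 0) := by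
      have hb : Tendsto (fun t : ℝ => x ^ 2 / t + t) atTop atTop := by
        apply Filter.tendsto_atTop_add_left_of_le' _ 0 ?_ tendsto_id
        filter_upwards [eventually_gt_atTop 0] with t ht
        positivity
      have := hb.inv_tendsto_atTop
      apply this.congr'
      filter_upwards [eventually_gt_atTop 0] with t ht
      have := sq_add_pos hx t
      show (fun t => x ^ 2 / t + t)⁻¹ t = t / (x ^ 2 + t ^ 2)
      rw [Pi.inv_apply, inv_eq_one_div]
      rw [div_eq_div_iff (by positivity) (ne_of_gt this)]
      field_simp
    have := h2.const_mul (1 / (2 * x ^ 2))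
    rw [mul_zero] at this
    exact this.congr (fun t => by ring)
  have h3 : Tendsto (fun t : ℝ => Real.arctan (t / x) / (2 * x ^ 3)) atTop
      (nhds (π / 2 / (2 * x ^ 3))) := by
    have h : Tendsto (fun t : ℝ => t / x) atTop atTop := tendsto_id.atTop_div_const hx
    exact ((Real.tendsto_arctan_atTop.mono_right nhdsWithin_le_nhds).comp h).div_const _
  have := h1.add h3
  rw [zero_add] at this
  convert this using 2
  ring

lemma integrable_g2 (hx : 0 < x) :
    IntegrableOn (fun t : ℝ => ((x ^ 2 + t ^ 2) ^ 2)⁻¹) (Ioi 0) :=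
  integrableOn_Ioi_deriv_of_nonneg'
    (fun t _ => hasDerivAt_Phi hx t) (fun t _ => by positivity) (tendsto_Phi hx)

lemma integral_g2 (hx : 0 < x) :
    ∫ t in Ioi (0:ℝ), ((x ^ 2 + t ^ 2) ^ 2)⁻¹ = π / (4 * x ^ 3) := by
  have := integral_Ioi_of_hasDerivAt_of_nonneg
    ((hasDerivAt_Phi hx 0).continuousAt.continuousWithinAt)
    (fun t _ => hasDerivAt_Phi hx t) (fun t _ => by positivity) (tendsto_Phi hx)
  simpa [Real.arctan_zero] using this

/-- antiderivative of t/(x²+t²)² -/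
lemma hasDerivAt_Psi (hx : 0 < x) (t : ℝ) :
    HasDerivAt (fun t : ℝ => -(2 * (x ^ 2 + t ^ 2))⁻¹) (t * ((x ^ 2 + t ^ 2) ^ 2)⁻¹) t := by
  have h0 := sq_add_pos hx t
  have h1 : HasDerivAt (fun t : ℝ => 2 * (x ^ 2 + t ^ 2)) (2 * (2 * t)) t := by
    have : HasDerivAt (fun t : ℝ => x ^ 2 + t ^ 2) (2 * t) t := by
      simpa using ((hasDerivAt_pow 2 t).const_add (x ^ 2))
    exact this.const_mul _
  have h2 := (h1.inv (by positivity)).neg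
  refine h2.congr_deriv ?_
  field_simp

lemma integrable_g3 (hx : 0 < x) :
    IntegrableOn (fun t : ℝ => t * ((x ^ 2 + t ^ 2) ^ 2)⁻¹) (Ioi 0) := by
  have hb : Tendsto (fun t : ℝ => 2 * (x ^ 2 + t ^ 2)) atTop atTop := by
    apply Tendsto.const_mul_atTop two_pos
    exact tendsto_atTop_add_const_left _ _ (tendsto_pow_atTop two_ne_zero)
  refine integrableOn_Ioi_deriv_of_nonneg' (l := 0) (fun t _ => hasDerivAt_Psi hx t)
    (fun t ht => by have := le_of_lt ht.out; positivity) ?_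
  simpa using (hb.inv_tendsto_atTop).neg

lemma integrable_osc (hx : 0 < x) {φ g : ℝ → ℝ} (hφ : Continuous φ)
    (hg : IntegrableOn g (Ioi 0)) (hb : ∀ t ∈ Ioi (0:ℝ), |φ t| ≤ g t) :
    IntegrableOn φ (Ioi 0) := by
  refine Integrable.mono' hg (hφ.aestronglyMeasurable.restrict) ?_
  rw [ae_restrict_iff' measurableSet_Ioi]
  exact Filter.Eventually.of_forall (fun t ht => hb t ht)

noncomputable def Mf (x a : ℝ) : ℝ := ∫ t in Ioi (0:ℝ), Real.cos (a * t) * ((x ^ 2 + t ^ 2) ^ 2)⁻¹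
noncomputable def Jf (x a : ℝ) : ℝ := ∫ t in Ioi (0:ℝ), t * Real.sin (a * t) * ((x ^ 2 + t ^ 2) ^ 2)⁻¹
noncomputable def Hf (x a : ℝ) : ℝ := ∫ t in Ioi (0:ℝ), Real.cos (a * t) * (x ^ 2 + t ^ 2)⁻¹

lemma cont_g1 (hx : 0 < x) : Continuous (fun t : ℝ => (x ^ 2 + t ^ 2)⁻¹) :=
  Continuous.inv₀ (by continuity) (fun t => ne_of_gt (sq_add_pos hx t))

lemma cont_g2 (hx : 0 < x) : Continuous (fun t : ℝ => ((x ^ 2 + t ^ 2) ^ 2)⁻¹) :=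
  Continuous.inv₀ (by continuity) (fun t => by positivity)

lemma cont_cos_g1 (hx : 0 < x) (a : ℝ) :
    Continuous (fun t : ℝ => Real.cos (a * t) * (x ^ 2 + t ^ 2)⁻¹) :=
  (Real.continuous_cos.comp (continuous_const.mul continuous_id)).mul (cont_g1 hx)

lemma cont_cos_g2 (hx : 0 < x) (a : ℝ) :
    Continuous (fun t : ℝ => Real.cos (a * t) * ((x ^ 2 + t ^ 2) ^ 2)⁻¹) :=
  (Real.continuous_cos.comp (continuous_const.mul continuous_id)).mul (cont_g2 hx)

lemma cont_tsin_g2 (hx : 0 < x) (a : ℝ) :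
    Continuous (fun t : ℝ => t * Real.sin (a * t) * ((x ^ 2 + t ^ 2) ^ 2)⁻¹) :=
  ((continuous_id.mul (Real.continuous_sin.comp (continuous_const.mul continuous_id))).mul (cont_g2 hx))

lemma integrable_Mf (hx : 0 < x) (a : ℝ) :
    IntegrableOn (fun t : ℝ => Real.cos (a * t) * ((x ^ 2 + t ^ 2) ^ 2)⁻¹) (Ioi 0) := by
  refine integrable_osc hx (cont_cos_g2 hx a) (integrable_g2 hx) (fun t ht => ?_)
  rw [abs_mul, abs_of_pos (show (0:ℝ) < ((x ^ 2 + t ^ 2) ^ 2)⁻¹ by positivity)]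
  exact mul_le_of_le_one_left (by positivity) (Real.abs_cos_le_one _)

lemma integrable_Jf (hx : 0 < x) (a : ℝ) :
    IntegrableOn (fun t : ℝ => t * Real.sin (a * t) * ((x ^ 2 + t ^ 2) ^ 2)⁻¹) (Ioi 0) := by
  refine integrable_osc hx (cont_tsin_g2 hx a) (integrable_g3 hx) (fun t ht => ?_)
  have ht' : 0 < t := ht
  rw [abs_mul, abs_mul, abs_of_pos ht', abs_of_pos (show (0:ℝ) < ((x ^ 2 + t ^ 2) ^ 2)⁻¹ by positivity)]
  exact mul_le_mul_of_nonneg_right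
    (mul_le_of_le_one_right ht'.le (Real.abs_sin_le_one _)) (by positivity)

lemma integrable_Hf (hx : 0 < x) (a : ℝ) :
    IntegrableOn (fun t : ℝ => Real.cos (a * t) * (x ^ 2 + t ^ 2)⁻¹) (Ioi 0) := by
  refine integrable_osc hx (cont_cos_g1 hx a) (integrable_g1 hx) (fun t ht => ?_)
  rw [abs_mul, abs_of_pos (show (0:ℝ) < (x ^ 2 + t ^ 2)⁻¹ by positivity)]
  exact mul_le_of_le_one_left (by positivity) (Real.abs_cos_le_one _)

/-- M' = -J everywhere -/
lemma hasDerivAt_Mf (hx : 0 < x) (a : ℝ) : HasDerivAt (Mf x) (-Jf x a) a := by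
  have key := hasDerivAt_integral_of_dominated_loc_of_deriv_le (μ := volume.restrict (Ioi 0))
    (F := fun b t => Real.cos (b * t) * ((x ^ 2 + t ^ 2) ^ 2)⁻¹)
    (F' := fun b t => -(t * Real.sin (b * t) * ((x ^ 2 + t ^ 2) ^ 2)⁻¹))
    (x₀ := a) (bound := fun t => t * ((x ^ 2 + t ^ 2) ^ 2)⁻¹) (s := Metric.ball a 1) (Metric.ball_mem_nhds a one_pos)
    (Filter.Eventually.of_forall (fun b => ((cont_cos_g2 hx b).aestronglyMeasurable).restrict))
    (integrable_Mf hx a)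
    (((cont_tsin_g2 hx a).neg.aestronglyMeasurable).restrict)
    ?_ (integrable_g3 hx) ?_
  · have h2 := key.2
    have : Jf x a = ∫ t in Ioi (0:ℝ), t * Real.sin (a * t) * ((x ^ 2 + t ^ 2) ^ 2)⁻¹ := rfl
    rw [show -Jf x a = ∫ t in Ioi (0:ℝ), -(t * Real.sin (a * t) * ((x ^ 2 + t ^ 2) ^ 2)⁻¹) by
      rw [MeasureTheory.integral_neg]
      rfl]
    exact h2
  · rw [ae_restrict_iff' measurableSet_Ioi]
    refine Filter.Eventually.of_forall (fun t ht b _ => ?_)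
    have ht' : (0:ℝ) < t := ht
    rw [Real.norm_eq_abs, abs_neg, abs_mul, abs_mul, abs_of_pos ht',
      abs_of_pos (show (0:ℝ) < ((x ^ 2 + t ^ 2) ^ 2)⁻¹ by positivity)]
    exact mul_le_mul_of_nonneg_right
      (mul_le_of_le_one_right ht'.le (Real.abs_sin_le_one _)) (by positivity)
  · refine Filter.Eventually.of_forall (fun t b _ => ?_)
    have h1 : HasDerivAt (fun b : ℝ => b * t) t b := by simpa using (hasDerivAt_id b).mul_const t
    have h2 := (Real.hasDerivAt_cos (b * t)).comp b h1
    have h3 := h2.mul_const (((x ^ 2 + t ^ 2) ^ 2)⁻¹)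
    refine h3.congr_deriv ?_
    ring

lemma t2g2_eq (hx : 0 < x) (t : ℝ) :
    t ^ 2 * ((x ^ 2 + t ^ 2) ^ 2)⁻¹ = (x ^ 2 + t ^ 2)⁻¹ - x ^ 2 * ((x ^ 2 + t ^ 2) ^ 2)⁻¹ := by
  have h0 := sq_add_pos hx t
  field_simp
  ring

/-- J' = H - x²M everywhere -/
lemma hasDerivAt_Jf (hx : 0 < x) (a : ℝ) :
    HasDerivAt (Jf x) (Hf x a - x ^ 2 * Mf x a) a := by
  have cont' : ∀ b : ℝ, Continuous (fun t : ℝ => t ^ 2 * Real.cos (b * t) * ((x ^ 2 + t ^ 2) ^ 2)⁻¹) :=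
    fun b => ((continuous_pow 2).mul (Real.continuous_cos.comp (continuous_const.mul continuous_id))).mul (cont_g2 hx)
  have key := hasDerivAt_integral_of_dominated_loc_of_deriv_le (μ := volume.restrict (Ioi 0))
    (F := fun b t => t * Real.sin (b * t) * ((x ^ 2 + t ^ 2) ^ 2)⁻¹)
    (F' := fun b t => t ^ 2 * Real.cos (b * t) * ((x ^ 2 + t ^ 2) ^ 2)⁻¹)
    (x₀ := a) (bound := fun t => (x ^ 2 + t ^ 2)⁻¹) (s := Metric.ball a 1) (Metric.ball_mem_nhds a one_pos)
    (Filter.Eventually.of_forall (fun b => ((cont_tsin_g2 hx b).aestronglyMeasurable).restrict))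
    (integrable_Jf hx a)
    (((cont' a).aestronglyMeasurable).restrict)
    ?_ (integrable_g1 hx) ?_
  · have h2 := key.2
    have heq : (∫ t in Ioi (0:ℝ), t ^ 2 * Real.cos (a * t) * ((x ^ 2 + t ^ 2) ^ 2)⁻¹)
        = Hf x a - x ^ 2 * Mf x a := by
      have e1 : ∀ t ∈ Ioi (0:ℝ), t ^ 2 * Real.cos (a * t) * ((x ^ 2 + t ^ 2) ^ 2)⁻¹
          = Real.cos (a * t) * (x ^ 2 + t ^ 2)⁻¹
            - x ^ 2 * (Real.cos (a * t) * ((x ^ 2 + t ^ 2) ^ 2)⁻¹) := by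
        intro t ht
        linear_combination Real.cos (a * t) * t2g2_eq hx t
      rw [setIntegral_congr_fun measurableSet_Ioi e1]
      rw [integral_sub (integrable_Hf hx a) ((integrable_Mf hx a).const_mul (x ^ 2))]
      rw [MeasureTheory.integral_const_mul]
      rfl
    rw [← heq]
    exact h2
  · rw [ae_restrict_iff' measurableSet_Ioi]
    refine Filter.Eventually.of_forall (fun t ht b _ => ?_)
    have ht' : (0:ℝ) < t := ht
    have h0 := sq_add_pos hx t
    rw [Real.norm_eq_abs, abs_mul, abs_mul, abs_of_pos (show (0:ℝ) < t ^ 2 by positivity),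
      abs_of_pos (show (0:ℝ) < ((x ^ 2 + t ^ 2) ^ 2)⁻¹ by positivity)]
    have h1 : t ^ 2 * |Real.cos (b * t)| * ((x ^ 2 + t ^ 2) ^ 2)⁻¹
        ≤ t ^ 2 * ((x ^ 2 + t ^ 2) ^ 2)⁻¹ :=
      mul_le_mul_of_nonneg_right
        (mul_le_of_le_one_right (by positivity) (Real.abs_cos_le_one _)) (by positivity)
    refine h1.trans ?_
    rw [t2g2_eq hx t]
    have : (0:ℝ) ≤ x ^ 2 * ((x ^ 2 + t ^ 2) ^ 2)⁻¹ := by positivity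
    linarith
  · refine Filter.Eventually.of_forall (fun t b _ => ?_)
    have h1 : HasDerivAt (fun b : ℝ => b * t) t b := by simpa using (hasDerivAt_id b).mul_const t
    have h2 := (Real.hasDerivAt_sin (b * t)).comp b h1
    have h3 := (h2.const_mul t).mul_const (((x ^ 2 + t ^ 2) ^ 2)⁻¹)
    refine h3.congr_deriv ?_
    ring

lemma tendsto_g1_zero (hx : 0 < x) :
    Tendsto (fun t : ℝ => (x ^ 2 + t ^ 2)⁻¹) atTop (nhds 0) := by
  have hb : Tendsto (fun t : ℝ => x ^ 2 + t ^ 2) atTop atTop :=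
    tendsto_atTop_add_const_left _ _ (tendsto_pow_atTop two_ne_zero)
  exact hb.inv_tendsto_atTop

/-- the key identity a·H = 2·J -/
lemma aH_eq_2J (hx : 0 < x) (a : ℝ) : a * Hf x a = 2 * Jf x a := by
  have hderiv : ∀ t ∈ Ici (0:ℝ), HasDerivAt (fun t : ℝ => Real.sin (a * t) * (x ^ 2 + t ^ 2)⁻¹)
      (a * (Real.cos (a * t) * (x ^ 2 + t ^ 2)⁻¹)
        - 2 * (t * Real.sin (a * t) * ((x ^ 2 + t ^ 2) ^ 2)⁻¹)) t := by
    intro t _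
    have h0 := sq_add_pos hx t
    have h1 : HasDerivAt (fun t : ℝ => a * t) a t := by simpa using (hasDerivAt_id t).const_mul a
    have h2 := (Real.hasDerivAt_sin (a * t)).comp t h1
    have h3 : HasDerivAt (fun t : ℝ => x ^ 2 + t ^ 2) (2 * t) t := by
      simpa using ((hasDerivAt_pow 2 t).const_add (x ^ 2))
    have h4 := h3.inv (ne_of_gt h0)
    have h5 := h2.mul h4
    refine h5.congr_deriv ?_
    simp only [Pi.inv_apply, Function.comp_apply]
    field_simp
    ring
  have hint : IntegrableOn (fun t : ℝ =>
      a * (Real.cos (a * t) * (x ^ 2 + t ^ 2)⁻¹)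
        - 2 * (t * Real.sin (a * t) * ((x ^ 2 + t ^ 2) ^ 2)⁻¹)) (Ioi 0) :=
    ((integrable_Hf hx a).const_mul a).sub ((integrable_Jf hx a).const_mul 2)
  have htend : Tendsto (fun t : ℝ => Real.sin (a * t) * (x ^ 2 + t ^ 2)⁻¹) atTop (nhds 0) := by
    refine squeeze_zero_norm (fun t => ?_) (tendsto_g1_zero hx)
    rw [Real.norm_eq_abs, abs_mul, abs_of_pos (show (0:ℝ) < (x ^ 2 + t ^ 2)⁻¹ from by positivity)]
    exact mul_le_of_le_one_left (by positivity) (Real.abs_sin_le_one _)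
  have := integral_Ioi_of_hasDerivAt_of_tendsto' hderiv hint htend
  rw [integral_sub ((integrable_Hf hx a).const_mul a) ((integrable_Jf hx a).const_mul 2),
    MeasureTheory.integral_const_mul, MeasureTheory.integral_const_mul] at this
  simp only [Real.sin_zero, mul_zero, zero_mul, sub_zero] at this
  have h4 : a * Hf x a - 2 * Jf x a = 0 := this
  linarith

noncomputable def m1 (x a : ℝ) : ℝ := (1 + a * x) * Real.exp (-(a * x))
noncomputable def m1' (x a : ℝ) : ℝ := -(a * x ^ 2) * Real.exp (-(a * x))
noncomputable def m1'' (x a : ℝ) : ℝ := (a * x ^ 3 - x ^ 2) * Real.exp (-(a * x))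
noncomputable def m2 (x a : ℝ) : ℝ := (1 - a * x) * Real.exp (a * x)
noncomputable def m2' (x a : ℝ) : ℝ := -(a * x ^ 2) * Real.exp (a * x)
noncomputable def m2'' (x a : ℝ) : ℝ := -(x ^ 2 + a * x ^ 3) * Real.exp (a * x)

lemma hasDerivAt_m1 (x a : ℝ) : HasDerivAt (m1 x) (m1' x a) a := by
  have h1 : HasDerivAt (fun a : ℝ => a * x) x a := hasDerivAt_mul_const x
  have h2 : HasDerivAt (fun a : ℝ => Real.exp (-(a * x))) (-x * Real.exp (-(a * x))) a := by
    have := (Real.hasDerivAt_exp (-(a * x))).comp a h1.neg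
    exact this.congr_deriv (by ring)
  have h3 : HasDerivAt (fun a : ℝ => 1 + a * x) x a := h1.const_add 1
  have := h3.mul h2
  refine this.congr_deriv ?_
  simp only [m1', m1]; ring

lemma hasDerivAt_m1' (x a : ℝ) : HasDerivAt (m1' x) (m1'' x a) a := by
  have h1 : HasDerivAt (fun a : ℝ => a * x) x a := hasDerivAt_mul_const x
  have h2 : HasDerivAt (fun a : ℝ => Real.exp (-(a * x))) (-x * Real.exp (-(a * x))) a := by
    have := (Real.hasDerivAt_exp (-(a * x))).comp a h1.neg
    exact this.congr_deriv (by ring)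
  have h3 : HasDerivAt (fun a : ℝ => -(a * x ^ 2)) (-(x ^ 2)) a := by
    exact (hasDerivAt_mul_const (x ^ 2)).neg
  have := h3.mul h2
  refine this.congr_deriv ?_
  simp only [m1'', m1']; ring

lemma hasDerivAt_m2 (x a : ℝ) : HasDerivAt (m2 x) (m2' x a) a := by
  have h1 : HasDerivAt (fun a : ℝ => a * x) x a := hasDerivAt_mul_const x
  have h2 : HasDerivAt (fun a : ℝ => Real.exp (a * x)) (x * Real.exp (a * x)) a := by
    have := (Real.hasDerivAt_exp (a * x)).comp a h1
    exact this.congr_deriv (by ring)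
  have h3 : HasDerivAt (fun a : ℝ => 1 - a * x) (-x) a := by
    exact (hasDerivAt_mul_const x).const_sub 1
  have := h3.mul h2
  refine this.congr_deriv ?_
  simp only [m2', m2]; ring

lemma hasDerivAt_m2' (x a : ℝ) : HasDerivAt (m2' x) (m2'' x a) a := by
  have h1 : HasDerivAt (fun a : ℝ => a * x) x a := hasDerivAt_mul_const x
  have h2 : HasDerivAt (fun a : ℝ => Real.exp (a * x)) (x * Real.exp (a * x)) a := by
    have := (Real.hasDerivAt_exp (a * x)).comp a h1
    exact this.congr_deriv (by ring)
  have h3 : HasDerivAt (fun a : ℝ => -(a * x ^ 2)) (-(x ^ 2)) a := by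
    exact (hasDerivAt_mul_const (x ^ 2)).neg
  have := h3.mul h2
  refine this.congr_deriv ?_
  simp only [m2'', m2']; ring

lemma m1_ode (x a : ℝ) : a * m1'' x a = 2 * m1' x a + a * x ^ 2 * m1 x a := by
  simp only [m1, m1', m1'']; ring

lemma m2_ode (x a : ℝ) : a * m2'' x a = 2 * m2' x a + a * x ^ 2 * m2 x a := by
  simp only [m2, m2', m2'']; ring

/-- the Wronskian-type quantity has zero derivative -/
lemma wronskian_deriv_zero {P P' P'' n n' n'' : ℝ → ℝ} {a c : ℝ} (ha : 0 < a)
    (hP : HasDerivAt P (P' a) a) (hP' : HasDerivAt P' (P'' a) a)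
    (hn : HasDerivAt n (n' a) a) (hn' : HasDerivAt n' (n'' a) a)
    (hPode : a * P'' a = 2 * P' a + a * c * P a)
    (hnode : a * n'' a = 2 * n' a + a * c * n a) :
    HasDerivAt (fun a => (a ^ 2)⁻¹ * (P' a * n a - P a * n' a)) 0 a := by
  have ha' : a ≠ 0 := ne_of_gt ha
  have h1 : HasDerivAt (fun a : ℝ => (a ^ 2)⁻¹) (-(2 * a) / (a ^ 2) ^ 2) a := by
    have := (hasDerivAt_pow 2 a).inv (pow_ne_zero 2 ha')
    exact this.congr_deriv (by norm_num)
  have h2 : HasDerivAt (fun a => P' a * n a - P a * n' a)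
      ((P'' a * n a + P' a * n' a) - (P' a * n' a + P a * n'' a)) a :=
    (hP'.mul hn).sub (hP.mul hn')
  have h3 := h1.mul h2
  refine h3.congr_deriv ?_
  have e1 : P'' a = (2 * P' a + a * c * P a) / a := by rw [← hPode]; field_simp
  have e2 : n'' a = (2 * n' a + a * c * n a) / a := by rw [← hnode]; field_simp
  rw [e1, e2]
  field_simp
  ring

/-- zero derivative on Ioi 0 gives constancy -/
lemma const_of_deriv_zero {f : ℝ → ℝ} (hf : ∀ a ∈ Ioi (0:ℝ), HasDerivAt f 0 a)
    {p q : ℝ} (hp : 0 < p) (hq : 0 < q) : f p = f q := by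
  wlog hpq : p ≤ q generalizing p q
  · exact (this hq hp (le_of_not_ge hpq)).symm
  have hcont : ContinuousOn f (Icc p q) := by
    intro y hy
    exact ((hf y (lt_of_lt_of_le hp hy.1)).continuousAt).continuousWithinAt
  have := constant_of_has_deriv_right_zero hcont (fun y hy => ?_) q (right_mem_Icc.mpr hpq)
  · exact this.symm
  · exact ((hf y (lt_of_lt_of_le hp hy.1)).hasDerivWithinAt)

noncomputable def Mf' (x a : ℝ) : ℝ := -Jf x a
noncomputable def Mf'' (x a : ℝ) : ℝ := -(Hf x a - x ^ 2 * Mf x a)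

lemma hasDerivAt_Mf' (hx : 0 < x) (a : ℝ) : HasDerivAt (Mf' x) (Mf'' x a) a :=
  (hasDerivAt_Jf hx a).neg

lemma Mf_ode (hx : 0 < x) {a : ℝ} :
    a * Mf'' x a = 2 * Mf' x a + a * x ^ 2 * Mf x a := by
  simp only [Mf', Mf'']
  have := aH_eq_2J hx a
  nlinarith [this]

noncomputable def Af (x a : ℝ) : ℝ := (a ^ 2)⁻¹ * (Mf' x a * m1 x a - Mf x a * m1' x a)
noncomputable def Bf (x a : ℝ) : ℝ := (a ^ 2)⁻¹ * (Mf' x a * m2 x a - Mf x a * m2' x a)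

lemma Af_const (hx : 0 < x) {a : ℝ} (ha : 0 < a) : Af x a = Af x 1 := by
  refine const_of_deriv_zero (fun b hb => ?_) ha one_pos
  exact wronskian_deriv_zero hb (hasDerivAt_Mf hx b) (hasDerivAt_Mf' hx b)
    (hasDerivAt_m1 x b) (hasDerivAt_m1' x b) (Mf_ode hx) (m1_ode x b)

lemma Bf_const (hx : 0 < x) {a : ℝ} (ha : 0 < a) : Bf x a = Bf x 1 := by
  refine const_of_deriv_zero (fun b hb => ?_) ha one_pos
  exact wronskian_deriv_zero hb (hasDerivAt_Mf hx b) (hasDerivAt_Mf' hx b)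
    (hasDerivAt_m2 x b) (hasDerivAt_m2' x b) (Mf_ode hx) (m2_ode x b)

lemma wronskian_m1_m2 (x a : ℝ) :
    m1' x a * m2 x a - m2' x a * m1 x a = 2 * a ^ 2 * x ^ 3 := by
  simp only [m1, m1', m2, m2']
  have h : Real.exp (-(a * x)) * Real.exp (a * x) = 1 := by
    rw [← Real.exp_add]; simp
  linear_combination (2 * a ^ 2 * x ^ 3) * h

/-- the representation 2x³·M = B₀·m1 - A₀·m2 -/
lemma Mf_rep (hx : 0 < x) {a : ℝ} (ha : 0 < a) :
    2 * x ^ 3 * Mf x a = Bf x 1 * m1 x a - Af x 1 * m2 x a := by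
  rw [← Af_const hx ha, ← Bf_const hx ha]
  simp only [Af, Bf]
  have ha2 : (a:ℝ) ^ 2 ≠ 0 := pow_ne_zero 2 (ne_of_gt ha)
  have hw := wronskian_m1_m2 x a
  field_simp
  linear_combination (-(Mf x a)) * hw

lemma Mf_bound (hx : 0 < x) (a : ℝ) : |Mf x a| ≤ π / (4 * x ^ 3) := by
  rw [← integral_g2 hx]
  have := MeasureTheory.norm_integral_le_of_norm_le (μ := volume.restrict (Ioi 0))
    (f := fun t : ℝ => Real.cos (a * t) * ((x ^ 2 + t ^ 2) ^ 2)⁻¹)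
    (g := fun t : ℝ => ((x ^ 2 + t ^ 2) ^ 2)⁻¹) (integrable_g2 hx) ?_
  · exact this
  · refine Filter.Eventually.of_forall (fun t => ?_)
    rw [Real.norm_eq_abs, abs_mul, abs_of_pos (show (0:ℝ) < ((x ^ 2 + t ^ 2) ^ 2)⁻¹ by positivity)]
    exact mul_le_of_le_one_left (by positivity) (Real.abs_cos_le_one _)

lemma tendsto_m1_zero (hx : 0 < x) : Tendsto (m1 x) atTop (nhds 0) := by
  have h1 : Tendsto (fun u : ℝ => (1 + u) * Real.exp (-u)) atTop (nhds 0) := by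
    have ha : Tendsto (fun u : ℝ => Real.exp (-u)) atTop (nhds 0) :=
      Real.tendsto_exp_neg_atTop_nhds_zero
    have hb : Tendsto (fun u : ℝ => u * Real.exp (-u)) atTop (nhds 0) := by
      simpa using Real.tendsto_pow_mul_exp_neg_atTop_nhds_zero 1
    have := ha.add hb
    rw [add_zero] at this
    exact this.congr (fun u => by ring)
  have h2 : Tendsto (fun a : ℝ => a * x) atTop atTop := tendsto_id.atTop_mul_const hx
  have := h1.comp h2
  exact this.congr (fun a => by simp [m1])

lemma tendsto_m2_atBot (hx : 0 < x) : Tendsto (m2 x) atTop atBot := by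
  have h1 : Tendsto (fun a : ℝ => -Real.exp (a * x)) atTop atBot := by
    refine Filter.tendsto_neg_atBot_iff.mpr ?_
    exact Real.tendsto_exp_atTop.comp (tendsto_id.atTop_mul_const hx)
  refine tendsto_atBot_mono' atTop ?_ h1
  filter_upwards [eventually_ge_atTop (2 / x)] with a haa
  have h2 : 2 ≤ a * x := by
    rw [div_le_iff₀ hx] at haa
    linarith
  have h3 : (0:ℝ) < Real.exp (a * x) := Real.exp_pos _
  simp only [m2]
  nlinarith

lemma Af_one_eq_zero (hx : 0 < x) : Af x 1 = 0 := by
  by_contra hA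
  set A0 := Af x 1 with hA0
  set B0 := Bf x 1 with hB0
  set K := |B0| + 2 * x ^ 3 * (π / (4 * x ^ 3)) with hK
  have hKpos : 0 ≤ K := by
    have h1 : (0:ℝ) < 2 * x ^ 3 * (π / (4 * x ^ 3)) := by positivity
    have h2 := abs_nonneg B0
    simp only [hK]
    linarith
  have hm1small : ∀ᶠ a in atTop, |m1 x a| < 1 := by
    have h := (tendsto_m1_zero hx).abs
    simp only [abs_zero] at h
    exact h.eventually_lt_const one_pos
  have hbound : ∀ᶠ a in atTop, |A0 * m2 x a| ≤ K := by
    filter_upwards [hm1small, eventually_gt_atTop 0] with a h1 ha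
    have hrep := Mf_rep hx ha
    have heq : A0 * m2 x a = B0 * m1 x a - 2 * x ^ 3 * Mf x a := by
      rw [hA0, hB0]; linarith
    rw [heq]
    have c1 : |B0 * m1 x a - 2 * x ^ 3 * Mf x a| ≤ |B0 * m1 x a| + |2 * x ^ 3 * Mf x a| :=
      abs_sub _ _
    have c2 : |B0 * m1 x a| ≤ |B0| := by
      rw [abs_mul]
      exact mul_le_of_le_one_right (abs_nonneg _) h1.le
    have c3 : |2 * x ^ 3 * Mf x a| ≤ 2 * x ^ 3 * (π / (4 * x ^ 3)) := by
      rw [abs_mul, abs_of_pos (show (0:ℝ) < 2 * x ^ 3 by positivity)]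
      exact mul_le_mul_of_nonneg_left (Mf_bound hx a) (by positivity)
    simp only [hK]
    linarith
  have hA' : 0 < |A0| := abs_pos.mpr hA
  have hm2 : ∀ᶠ a in atTop, m2 x a ≤ -((K + 1) / |A0|) :=
    (tendsto_m2_atBot hx).eventually (eventually_le_atBot _)
  obtain ⟨a, h1, h2⟩ := (hbound.and hm2).exists
  have h3 : (K + 1) / |A0| ≤ |m2 x a| := by
    have : (K + 1) / |A0| ≤ -m2 x a := by linarith
    exact this.trans (neg_le_abs _)
  have h4 : K + 1 ≤ |A0 * m2 x a| := by
    rw [abs_mul]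
    have := mul_le_mul_of_nonneg_left h3 hA'.le
    rwa [mul_div_cancel₀ _ (ne_of_gt hA')] at this
  linarith

lemma Mf_zero (hx : 0 < x) : Mf x 0 = π / (4 * x ^ 3) := by
  rw [← integral_g2 hx]
  simp only [Mf, zero_mul, Real.cos_zero, one_mul]

lemma Bf_one (hx : 0 < x) : Bf x 1 = π / 2 := by
  have hL : Tendsto (fun a => 2 * x ^ 3 * Mf x a) (nhdsWithin 0 (Ioi 0))
      (nhds (2 * x ^ 3 * (π / (4 * x ^ 3)))) := by
    have hcont : ContinuousAt (Mf x) 0 := (hasDerivAt_Mf hx 0).continuousAt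
    have := (hcont.tendsto.const_mul (2 * x ^ 3)).mono_left
      (nhdsWithin_le_nhds : nhdsWithin (0:ℝ) (Ioi 0) ≤ nhds 0)
    rwa [Mf_zero hx] at this
  have hR : Tendsto (fun a => Bf x 1 * m1 x a - Af x 1 * m2 x a) (nhdsWithin 0 (Ioi 0))
      (nhds (Bf x 1 * 1 - Af x 1 * 1)) := by
    have hm1 : ContinuousAt (m1 x) 0 := (hasDerivAt_m1 x 0).continuousAt
    have hm2 : ContinuousAt (m2 x) 0 := (hasDerivAt_m2 x 0).continuousAt
    have h1 : m1 x 0 = 1 := by simp [m1]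
    have h2 : m2 x 0 = 1 := by simp [m2]
    have := ((hm1.tendsto.const_mul (Bf x 1)).sub (hm2.tendsto.const_mul (Af x 1))).mono_left
      (nhdsWithin_le_nhds : nhdsWithin (0:ℝ) (Ioi 0) ≤ nhds 0)
    rwa [h1, h2] at this
  have heq : (fun a => 2 * x ^ 3 * Mf x a) =ᶠ[nhdsWithin 0 (Ioi 0)]
      (fun a => Bf x 1 * m1 x a - Af x 1 * m2 x a) := by
    filter_upwards [self_mem_nhdsWithin] with a ha
    exact Mf_rep hx ha
  have := tendsto_nhds_unique (hL.congr' heq) hR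
  rw [Af_one_eq_zero hx] at this
  have hx3 : (x:ℝ) ^ 3 ≠ 0 := by positivity
  rw [zero_mul, sub_zero, mul_one] at this
  rw [show Bf x 1 = 2 * x ^ 3 * (π / (4 * x ^ 3)) from this.symm]
  field_simp
  ring

lemma Mf_formula (hx : 0 < x) {a : ℝ} (ha : 0 < a) :
    Mf x a = π / (4 * x ^ 3) * m1 x a := by
  have := Mf_rep hx ha
  rw [Af_one_eq_zero hx, Bf_one hx] at this
  have hx3 : (x:ℝ) ^ 3 ≠ 0 := by positivity
  field_simp at this ⊢
  linarith

lemma Jf_formula (hx : 0 < x) {a : ℝ} (ha : 0 < a) :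
    Jf x a = π / (4 * x) * (a * Real.exp (-(a * x))) := by
  have h1 : HasDerivAt (Mf x) (-Jf x a) a := hasDerivAt_Mf hx a
  have h2 : HasDerivAt (fun b => π / (4 * x ^ 3) * m1 x b) (π / (4 * x ^ 3) * m1' x a) a :=
    (hasDerivAt_m1 x a).const_mul _
  have h3 : HasDerivAt (Mf x) (π / (4 * x ^ 3) * m1' x a) a := by
    refine h2.congr_of_eventuallyEq ?_
    filter_upwards [IsOpen.mem_nhds isOpen_Ioi ha] with b hb
    exact Mf_formula hx hb
  have h4 := h1.unique h3
  rw [show m1' x a = -(a * x ^ 2) * Real.exp (-(a * x)) from rfl] at h4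
  have hx' : (x:ℝ) ≠ 0 := ne_of_gt hx
  have h5 : Jf x a = π / (4 * x ^ 3) * (a * x ^ 2 * Real.exp (-(a * x))) := by linarith
  rw [h5]
  field_simp

lemma Hf_formula (hx : 0 < x) {a : ℝ} (ha : 0 < a) :
    Hf x a = π / (2 * x) * Real.exp (-(a * x)) := by
  have h1 := aH_eq_2J hx a
  rw [Jf_formula hx ha] at h1
  have hx' : (x:ℝ) ≠ 0 := ne_of_gt hx
  have ha' : (a:ℝ) ≠ 0 := ne_of_gt ha
  have h2 : Hf x a = 2 * (π / (4 * x) * (a * Real.exp (-(a * x)))) / a :=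
    eq_div_of_mul_eq ha' (by linarith)
  rw [h2]
  field_simp
  ring

lemma tendsto_tg1_zero (hx : 0 < x) :
    Tendsto (fun t : ℝ => t * (x ^ 2 + t ^ 2)⁻¹) atTop (nhds 0) := by
  have hb : Tendsto (fun t : ℝ => x ^ 2 / t + t) atTop atTop := by
    apply Filter.tendsto_atTop_add_left_of_le' _ 0 ?_ tendsto_id
    filter_upwards [eventually_gt_atTop 0] with t ht
    positivity
  apply hb.inv_tendsto_atTop.congr'
  filter_upwards [eventually_gt_atTop 0] with t ht
  have h0 := sq_add_pos hx t
  show (fun t => x ^ 2 / t + t)⁻¹ t = t * (x ^ 2 + t ^ 2)⁻¹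
  rw [Pi.inv_apply, inv_eq_one_div, ← div_eq_mul_inv]
  rw [div_eq_div_iff (by positivity) (ne_of_gt h0)]
  field_simp

lemma integrable_w (hx : 0 < x) (a : ℝ) :
    IntegrableOn (fun t : ℝ => Real.cos (a * t) * ((x ^ 2 - t ^ 2) * ((x ^ 2 + t ^ 2) ^ 2)⁻¹))
      (Ioi 0) := by
  refine integrable_osc hx ?_ (integrable_g1 hx) (fun t ht => ?_)
  · exact (Real.continuous_cos.comp (continuous_const.mul continuous_id)).mul
      (((continuous_const.sub (continuous_pow 2)).mul (cont_g2 hx)))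
  · have h0 := sq_add_pos hx t
    rw [abs_mul, abs_mul, abs_of_pos (show (0:ℝ) < ((x ^ 2 + t ^ 2) ^ 2)⁻¹ by positivity)]
    have c1 : |Real.cos (a * t)| ≤ 1 := Real.abs_cos_le_one _
    have c2 : |x ^ 2 - t ^ 2| ≤ x ^ 2 + t ^ 2 := by
      rw [abs_sub_le_iff]
      constructor <;> nlinarith [sq_nonneg t, sq_nonneg x]
    calc |Real.cos (a * t)| * (|x ^ 2 - t ^ 2| * ((x ^ 2 + t ^ 2) ^ 2)⁻¹)
        ≤ 1 * ((x ^ 2 + t ^ 2) * ((x ^ 2 + t ^ 2) ^ 2)⁻¹) := by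
          refine mul_le_mul c1 (mul_le_mul_of_nonneg_right c2 (by positivity)) (by positivity) one_pos.le
      _ = (x ^ 2 + t ^ 2)⁻¹ := by
          rw [one_mul]
          field_simp
  
lemma integral_w (hx : 0 < x) (a : ℝ) :
    ∫ t in Ioi (0:ℝ), Real.cos (a * t) * ((x ^ 2 - t ^ 2) * ((x ^ 2 + t ^ 2) ^ 2)⁻¹)
      = 2 * x ^ 2 * Mf x a - Hf x a := by
  have e1 : ∀ t ∈ Ioi (0:ℝ), Real.cos (a * t) * ((x ^ 2 - t ^ 2) * ((x ^ 2 + t ^ 2) ^ 2)⁻¹)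
      = 2 * x ^ 2 * (Real.cos (a * t) * ((x ^ 2 + t ^ 2) ^ 2)⁻¹)
        - Real.cos (a * t) * (x ^ 2 + t ^ 2)⁻¹ := by
    intro t ht
    have h0 := sq_add_pos hx t
    have hg : (x ^ 2 + t ^ 2) * ((x ^ 2 + t ^ 2) ^ 2)⁻¹ = (x ^ 2 + t ^ 2)⁻¹ := by
      field_simp
    rw [← hg]
    ring
  rw [setIntegral_congr_fun measurableSet_Ioi e1,
    integral_sub ((integrable_Mf hx a).const_mul _) (integrable_Hf hx a),
    MeasureTheory.integral_const_mul]
  rfl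

theorem main (a x : ℝ) (ha : 0 < a) (hx : 0 < x) :
    Tendsto (fun R : ℝ => ∫ t in (0:ℝ)..R, t * Real.sin (a * t) / (x ^ 2 + t ^ 2))
      atTop (nhds ((π / 2) * Real.exp (-a * x))) := by
  have ha' : (a:ℝ) ≠ 0 := ne_of_gt ha
  set u : ℝ → ℝ := fun t => -(Real.cos (a * t) / a) * (t * (x ^ 2 + t ^ 2)⁻¹) with hu
  set w : ℝ → ℝ := fun t => Real.cos (a * t) * ((x ^ 2 - t ^ 2) * ((x ^ 2 + t ^ 2) ^ 2)⁻¹) with hw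
  have hderiv : ∀ t : ℝ, HasDerivAt u
      (t * Real.sin (a * t) * (x ^ 2 + t ^ 2)⁻¹ - (1 / a) * w t) t := by
    intro t
    have h0 := sq_add_pos hx t
    have h1 : HasDerivAt (fun t : ℝ => a * t) a t := by simpa using (hasDerivAt_id t).const_mul a
    have h2 : HasDerivAt (fun t : ℝ => -(Real.cos (a * t) / a)) (Real.sin (a * t)) t := by
      have := ((Real.hasDerivAt_cos (a * t)).comp t h1).div_const a
      have h3 := this.neg
      refine h3.congr_deriv ?_
      field_simp
    have h4 : HasDerivAt (fun t : ℝ => x ^ 2 + t ^ 2) (2 * t) t := by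
      simpa using ((hasDerivAt_pow 2 t).const_add (x ^ 2))
    have h5 : HasDerivAt (fun t : ℝ => t * (x ^ 2 + t ^ 2)⁻¹)
        (1 * (x ^ 2 + t ^ 2)⁻¹ + t * (-(2 * t) / (x ^ 2 + t ^ 2) ^ 2)) t :=
      (hasDerivAt_id t).mul (h4.inv (ne_of_gt h0))
    have h6 := h2.mul h5
    refine h6.congr_deriv ?_
    simp only [hw]
    field_simp
    ring
  have hcont_w : Continuous w := (Real.continuous_cos.comp (continuous_const.mul continuous_id)).mul
      (((continuous_const.sub (continuous_pow 2)).mul (cont_g2 hx)))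
  have hcont_v : Continuous (fun t : ℝ => t * Real.sin (a * t) * (x ^ 2 + t ^ 2)⁻¹) :=
    (continuous_id.mul (Real.continuous_sin.comp (continuous_const.mul continuous_id))).mul (cont_g1 hx)
  have key : ∀ R : ℝ, (∫ t in (0:ℝ)..R, t * Real.sin (a * t) / (x ^ 2 + t ^ 2))
      = (u R - u 0) + (1 / a) * ∫ t in (0:ℝ)..R, w t := by
    intro R
    have hFTC := intervalIntegral.integral_eq_sub_of_hasDerivAt
      (f := u) (f' := fun t => t * Real.sin (a * t) * (x ^ 2 + t ^ 2)⁻¹ - (1 / a) * w t)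
      (fun t _ => hderiv t) ((hcont_v.sub (continuous_const.mul hcont_w : Continuous (fun t => (1/a) * w t))).intervalIntegrable 0 R)
    rw [intervalIntegral.integral_sub (hcont_v.intervalIntegrable 0 R)
      ((show Continuous (fun t => (1/a) * w t) from continuous_const.mul hcont_w).intervalIntegrable 0 R)] at hFTC
    rw [intervalIntegral.integral_const_mul] at hFTC
    have : (∫ t in (0:ℝ)..R, t * Real.sin (a * t) * (x ^ 2 + t ^ 2)⁻¹)
        = (u R - u 0) + (1 / a) * ∫ t in (0:ℝ)..R, w t := by linarith
    rw [← this]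
    simp only [div_eq_mul_inv]
  have hu0 : u 0 = 0 := by simp [hu]
  have huR : Tendsto u atTop (nhds 0) := by
    have hlim : Tendsto (fun R : ℝ => (1 / a) * (R * (x ^ 2 + R ^ 2)⁻¹)) atTop (nhds 0) := by
      have := (tendsto_tg1_zero hx).const_mul (1 / a)
      rwa [mul_zero] at this
    refine squeeze_zero_norm' ?_ hlim
    filter_upwards [eventually_ge_atTop (0:ℝ)] with R hR
    have h0 := sq_add_pos hx R
    have hg : (0:ℝ) ≤ R * (x ^ 2 + R ^ 2)⁻¹ := by positivity
    simp only [hu, Real.norm_eq_abs, abs_mul, abs_neg, abs_div, abs_of_pos ha,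
      abs_of_nonneg hg]
    rw [div_eq_mul_inv, mul_comm |Real.cos (a * R)| a⁻¹, mul_assoc, one_div]
    refine mul_le_mul_of_nonneg_left ?_ (by positivity)
    exact mul_le_of_le_one_left hg (Real.abs_cos_le_one _)
  have hIw : Tendsto (fun R : ℝ => ∫ t in (0:ℝ)..R, w t) atTop
      (nhds (2 * x ^ 2 * Mf x a - Hf x a)) := by
    have := intervalIntegral_tendsto_integral_Ioi 0 (integrable_w hx a) tendsto_id
    rwa [integral_w hx a] at this
  have hfin := (huR.sub_const (u 0)).add (hIw.const_mul (1 / a))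
  have hval : (0 - u 0) + (1 / a) * (2 * x ^ 2 * Mf x a - Hf x a)
      = π / 2 * Real.exp (-a * x) := by
    rw [hu0, Mf_formula hx ha, Hf_formula hx ha]
    simp only [m1]
    rw [neg_mul]
    field_simp
    ring
  rw [hval] at hfin
  exact Tendsto.congr (fun R => (key R).symm) hfin

end TSin

open Real MeasureTheory Filter intervalIntegral

theorem t_sin_integral (a x : ℝ) (ha : 0 < a) (hx : 0 < x) :
    Tendsto (fun R : ℝ => ∫ t in (0:ℝ)..R, t * Real.sin (a * t) / (x ^ 2 + t ^ 2))
      atTop (nhds ((Real.pi / 2) * Real.exp (-a * x))) := by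
  exact TSin.main a x ha hx
end

section
/- For all α > 0 and x > 0, the integral over t in (0, ∞) of arctan(α t) / (t · (x² + t²)) dt equals (π / (2x²)) · log(1 + α x). -/
open Real MeasureTheory Set Filter Topology

lemma inner_int (x s : ℝ) (hx : 0 < x) (hs : 0 < s) (hsx : s * x ≠ 1) :
    ∫ t in Ioi (0:ℝ), ((1+(s*t)^2)*(x^2+t^2))⁻¹
      = π / (2*x*(1+s*x)) := by
  have hx0 : x ≠ 0 := hx.ne'
  have h1sx : 1 - (s*x)^2 ≠ 0 := by
    intro h
    have h1 : (s*x)^2 = 1 := by linarith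
    have hsx0 : 0 < s*x := mul_pos hs hx
    have h2 : (s*x-1)*(s*x+1) = 0 := by nlinarith
    rcases mul_eq_zero.mp h2 with h3 | h3
    · exact hsx (by linarith)
    · linarith
  have h1sx' : 1 + s*x ≠ 0 := by nlinarith [mul_pos hs hx]
  set F : ℝ → ℝ := fun t => (1-(s*x)^2)⁻¹ * ((1/x) * arctan (t/x) - s * arctan (s*t)) with hF
  have hderiv : ∀ t : ℝ, HasDerivAt F (((1+(s*t)^2)*(x^2+t^2))⁻¹) t := by
    intro t
    have h1 : HasDerivAt (fun t : ℝ => (1/x) * arctan (t/x)) ((1/(1+(t/x)^2)) * (1/x) * (1/x)) t := by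
      have h1' : HasDerivAt (fun t : ℝ => t / x) (1 / x) t := (hasDerivAt_id t).div_const x
      have := ((hasDerivAt_arctan (t/x)).comp t h1').const_mul (1/x)
      exact this.congr_deriv (by ring)
    have h2 : HasDerivAt (fun t : ℝ => s * arctan (s*t)) ((1/(1+(s*t)^2)) * s * s) t := by
      have h2' : HasDerivAt (fun t : ℝ => s * t) s t := by
        simpa using (hasDerivAt_id t).const_mul s
      have := ((hasDerivAt_arctan (s*t)).comp t h2').const_mul s
      exact this.congr_deriv (by ring)
    have := (h1.sub h2).const_mul ((1-(s*x)^2)⁻¹)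
    refine this.congr_deriv ?_
    have hA : (1:ℝ) + (t/x)^2 ≠ 0 := by positivity
    have hB : (1:ℝ) + (s*t)^2 ≠ 0 := by positivity
    have hC : x^2 + t^2 ≠ 0 := by positivity
    have : 1 - s^2*x^2 ≠ 0 := by ring_nf at h1sx ⊢; simpa using h1sx
    field_simp
    ring
  have htend : Tendsto F atTop (𝓝 ((1-(s*x)^2)⁻¹ * ((1/x) * (π/2) - s * (π/2)))) := by
    have ha : Tendsto arctan atTop (𝓝 (π/2)) :=
      tendsto_arctan_atTop.mono_right nhdsWithin_le_nhds
    have h1 : Tendsto (fun t : ℝ => arctan (t/x)) atTop (𝓝 (π/2)) :=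
      ha.comp (tendsto_id.atTop_div_const hx)
    have h2 : Tendsto (fun t : ℝ => arctan (s*t)) atTop (𝓝 (π/2)) :=
      ha.comp (tendsto_id.const_mul_atTop hs)
    exact (((h1.const_mul (1/x)).sub (h2.const_mul s)).const_mul _)
  have hval := integral_Ioi_of_hasDerivAt_of_nonneg (g := F)
      (g' := fun t => ((1+(s*t)^2)*(x^2+t^2))⁻¹) (a := 0)
      (hderiv 0).continuousAt.continuousWithinAt
      (fun t _ => hderiv t) (fun t _ => by positivity) htend
  rw [hval, hF]
  simp only [zero_div, mul_zero, arctan_zero, mul_zero, sub_zero, mul_zero]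
  have : 1 - s^2*x^2 ≠ 0 := by ring_nf at h1sx ⊢; simpa using h1sx
  field_simp
  ring

lemma stepA (α x : ℝ) (hα : 0 < α) (hx : 0 < x) (t : ℝ) (ht : t ∈ Ioi (0:ℝ)) :
    arctan (α * t) / (t * (x ^ 2 + t ^ 2))
      = ∫ s in Ioc (0:ℝ) α, ((1+(s*t)^2)*(x^2+t^2))⁻¹ := by
  have ht0 : (0:ℝ) < t := ht
  have harc : arctan (α * t) = ∫ s in (0:ℝ)..α, (1/(1+(s*t)^2)) * t := by
    rw [intervalIntegral.integral_eq_sub_of_hasDerivAt (f := fun s => arctan (s*t))]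
    · simp
    · intro s _
      have h2' : HasDerivAt (fun s : ℝ => s * t) t s := by
        simpa using (hasDerivAt_id s).mul_const t
      exact (hasDerivAt_arctan (s*t)).comp s h2'
    · apply Continuous.intervalIntegrable
      fun_prop (disch := intro s; positivity)
  rw [harc, intervalIntegral.integral_of_le hα.le, div_eq_mul_inv, ← integral_mul_const]
  refine setIntegral_congr_fun measurableSet_Ioc (fun s _ => ?_)
  have h1 : (1:ℝ)+(s*t)^2 ≠ 0 := by positivity
  have h2 : x^2+t^2 ≠ 0 := by positivity
  field_simp

theorem arctan_integral (α x : ℝ) (hα : 0 < α) (hx : 0 < x) :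
    ∫ t in Set.Ioi (0:ℝ), Real.arctan (α * t) / (t * (x ^ 2 + t ^ 2))
      = (Real.pi / (2 * x ^ 2)) * Real.log (1 + α * x) := by
  have hx0 : x ≠ 0 := hx.ne'
  set f : ℝ → ℝ → ℝ := fun t s => ((1+(s*t)^2)*(x^2+t^2))⁻¹ with hf
  have hcont : Continuous (Function.uncurry f) := by
    apply Continuous.inv₀
    · fun_prop
    · intro p
      have : x^2 + p.1^2 > 0 := by positivity
      positivity
  -- Integrability of the comparison function
  have hgint : IntegrableOn (fun t : ℝ => (x^2+t^2)⁻¹) (Ioi (0:ℝ)) := by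
    have hderiv : ∀ t : ℝ, HasDerivAt (fun t : ℝ => (1/x) * arctan (t/x)) ((x^2+t^2)⁻¹) t := by
      intro t
      have h1' : HasDerivAt (fun t : ℝ => t / x) (1 / x) t := (hasDerivAt_id t).div_const x
      have h2 := ((hasDerivAt_arctan (t/x)).comp t h1').const_mul (1/x)
      refine h2.congr_deriv ?_
      have hA : (1:ℝ) + (t/x)^2 ≠ 0 := by positivity
      field_simp
    have htend : Tendsto (fun t : ℝ => (1/x) * arctan (t/x)) atTop (𝓝 ((1/x) * (π/2))) := by
      have ha : Tendsto arctan atTop (𝓝 (π/2)) :=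
        tendsto_arctan_atTop.mono_right nhdsWithin_le_nhds
      exact (ha.comp (tendsto_id.atTop_div_const hx)).const_mul (1/x)
    exact integrableOn_Ioi_deriv_of_nonneg (hderiv 0).continuousAt.continuousWithinAt
      (fun t _ => hderiv t) (fun t _ => by positivity) htend
  -- Integrability on the product
  have hInt : Integrable (Function.uncurry f)
      ((volume.restrict (Ioi (0:ℝ))).prod (volume.restrict (Ioc (0:ℝ) α))) := by
    rw [integrable_prod_iff hcont.aestronglyMeasurable]
    constructor
    · refine Eventually.of_forall (fun t => ?_)
      exact (hcont.comp (Continuous.prodMk_right t)).integrableOn_Ioc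
    · have hbound : ∀ t s : ℝ, ‖f t s‖ ≤ (x^2+t^2)⁻¹ := by
        intro t s
        have h1 : (0:ℝ) < x^2+t^2 := by positivity
        have h2 : (0:ℝ) < 1+(s*t)^2 := by positivity
        show |((1 + (s * t) ^ 2) * (x ^ 2 + t ^ 2))⁻¹| ≤ (x^2+t^2)⁻¹
        rw [abs_of_nonneg (by positivity), mul_inv]
        have ha : ((1:ℝ)+(s*t)^2)⁻¹ ≤ 1 := inv_le_one_of_one_le₀ (by nlinarith)
        have hb : (0:ℝ) ≤ (x^2+t^2)⁻¹ := by positivity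
        have hc : (0:ℝ) ≤ (1+(s*t)^2)⁻¹ := by positivity
        nlinarith
      apply Integrable.mono' (g := fun t => α * (x^2+t^2)⁻¹) (hgint.const_mul α)
      · exact (hcont.aestronglyMeasurable.norm.integral_prod_right')
      · refine Eventually.of_forall (fun t => ?_)
        have h := norm_integral_le_of_norm_le_const (μ := volume.restrict (Ioc (0:ℝ) α))
          (f := fun s => ‖f t s‖) (C := (x^2+t^2)⁻¹)
          (Eventually.of_forall (fun s => by simpa using hbound t s))
        calc ‖∫ s in Ioc (0:ℝ) α, ‖f t s‖‖ ≤
            (x^2+t^2)⁻¹ * ((volume.restrict (Ioc (0:ℝ) α)) univ).toReal := h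
          _ = α * (x^2+t^2)⁻¹ := by
              rw [Measure.restrict_apply_univ, Real.volume_Ioc, ENNReal.toReal_ofReal (by linarith)]
              ring_nf
  -- Rewrite the integrand and swap
  have step1 : ∫ t in Ioi (0:ℝ), arctan (α * t) / (t * (x ^ 2 + t ^ 2))
      = ∫ t in Ioi (0:ℝ), ∫ s in Ioc (0:ℝ) α, f t s :=
    setIntegral_congr_fun measurableSet_Ioi (fun t ht => stepA α x hα hx t ht)
  have step2 : ∫ t in Ioi (0:ℝ), ∫ s in Ioc (0:ℝ) α, f t s
      = ∫ s in Ioc (0:ℝ) α, ∫ t in Ioi (0:ℝ), f t s :=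
    integral_integral_swap hInt
  have hae : ∀ᵐ s : ℝ, s ≠ 1/x := by
    have h0 : volume ({1/x} : Set ℝ) = 0 := Real.volume_singleton
    have := compl_mem_ae_iff.mpr h0
    exact eventually_of_mem this (fun s hs => hs)
  have step3 : ∫ s in Ioc (0:ℝ) α, ∫ t in Ioi (0:ℝ), f t s
      = ∫ s in Ioc (0:ℝ) α, π/(2*x*(1+s*x)) := by
    refine setIntegral_congr_ae measurableSet_Ioc ?_
    filter_upwards [hae] with s hs hs'
    exact inner_int x s hx hs'.1 (fun h => hs ((eq_div_iff hx0).mpr h))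
  have step4 : ∫ s in Ioc (0:ℝ) α, π/(2*x*(1+s*x)) = π/(2*x^2) * log (1+α*x) := by
    rw [← intervalIntegral.integral_of_le hα.le]
    rw [intervalIntegral.integral_eq_sub_of_hasDerivAt
      (f := fun s => π/(2*x^2) * log (1+s*x))]
    · simp
    · intro s hs
      rw [uIcc_of_le hα.le] at hs
      have h1 : (1:ℝ)+s*x ≠ 0 := by nlinarith [hs.1, mul_nonneg hs.1 hx.le]
      have h2 : HasDerivAt (fun s : ℝ => 1+s*x) x s := by
        simpa using ((hasDerivAt_id s).mul_const x).const_add 1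
      have hl := (Real.hasDerivAt_log h1).comp s h2
      have := hl.const_mul (π/(2*x^2))
      refine this.congr_deriv ?_
      field_simp
    · apply ContinuousOn.intervalIntegrable
      apply ContinuousOn.div continuousOn_const (by fun_prop)
      intro s hs
      rw [uIcc_of_le hα.le] at hs
      have h0s : (0:ℝ) ≤ s := hs.1
      have : (0:ℝ) < 1 + s*x := by nlinarith
      positivity
  rw [step1, step2, step3, step4]
end
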